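/- Given the identities cosh(AB)·tanh(BC) = tanh(AD) and tanh(CD) = tanh(AB)·cosh(BC) for positive reals AB, BC, CD, AD with tanh(AD) > tanh(BC), it follows that cosh(CD)·sinh(BC) = sinh(AD). -/
import Mathlib


open Real

/-- Algebraic hyperbolic-trigonometric deduction: from
`cosh a · tanh b = tanh d` and `tanh c = tanh a · cosh b` with `tanh b < tanh d`,
conclude `cosh c · sinh b = sinh d`. -/
theorem lambert_algebraic (a b c d : ℝ)
    (ha : 0 < a) (hb : 0 < b) (hc : 0 < c) (hd : 0 < d)
    (h₁ : Real.cosh a * Real.tanh b = Real.tanh d)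
    (h₂ : Real.tanh c = Real.tanh a * Real.cosh b)
    (h₃ : Real.tanh b < Real.tanh d) :
    Real.cosh c * Real.sinh b = Real.sinh d := by
  have ca := Real.cosh_pos a
  have cb := Real.cosh_pos b
  have cc := Real.cosh_pos c
  have cd := Real.cosh_pos d
  have sa : 0 < Real.sinh a := Real.sinh_pos_iff.2 ha
  have sb : 0 < Real.sinh b := Real.sinh_pos_iff.2 hb
  have sd : 0 < Real.sinh d := Real.sinh_pos_iff.2 hd
  rw [Real.tanh_eq_sinh_div_cosh, Real.tanh_eq_sinh_div_cosh] at h₁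
  rw [Real.tanh_eq_sinh_div_cosh, Real.tanh_eq_sinh_div_cosh] at h₂
  have e1 : Real.cosh a * Real.sinh b * Real.cosh d = Real.sinh d * Real.cosh b := by
    field_simp at h₁; linarith
  have e2 : Real.sinh c * Real.cosh a = Real.sinh a * Real.cosh b * Real.cosh c := by
    field_simp at h₂; linarith
  have pa : Real.cosh a ^ 2 = Real.sinh a ^ 2 + 1 := Real.cosh_sq a
  have pb : Real.cosh b ^ 2 = Real.sinh b ^ 2 + 1 := Real.cosh_sq b
  have pc : Real.cosh c ^ 2 = Real.sinh c ^ 2 + 1 := Real.cosh_sq c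
  have pd : Real.cosh d ^ 2 = Real.sinh d ^ 2 + 1 := Real.cosh_sq d
  have e1sq : (Real.cosh a * Real.sinh b * Real.cosh d) ^ 2
      = (Real.sinh d * Real.cosh b) ^ 2 := by rw [e1]
  have e2sq : (Real.sinh c * Real.cosh a) ^ 2
      = (Real.sinh a * Real.cosh b * Real.cosh c) ^ 2 := by rw [e2]
  have q1 : Real.sinh d ^ 2 * (1 - Real.sinh a ^ 2 * Real.sinh b ^ 2)
      = Real.cosh a ^ 2 * Real.sinh b ^ 2 := by
    linear_combination -e1sq + Real.sinh b ^ 2 * Real.sinh d ^ 2 * pa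
      - Real.sinh d ^ 2 * pb + Real.cosh a ^ 2 * Real.sinh b ^ 2 * pd
  have q2 : Real.sinh c ^ 2 * (1 - Real.sinh a ^ 2 * Real.sinh b ^ 2)
      = Real.sinh a ^ 2 * Real.cosh b ^ 2 := by
    linear_combination e2sq + Real.sinh a ^ 2 * Real.cosh b ^ 2 * pc
      - Real.sinh c ^ 2 * pa + Real.sinh a ^ 2 * Real.sinh c ^ 2 * pb
  have q3 : Real.cosh c ^ 2 * (1 - Real.sinh a ^ 2 * Real.sinh b ^ 2)
      = Real.cosh a ^ 2 := by
    linear_combination (1 - Real.sinh a ^ 2 * Real.sinh b ^ 2) * pc + q2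
      + Real.sinh a ^ 2 * pb - pa
  have hK : 0 < 1 - Real.sinh a ^ 2 * Real.sinh b ^ 2 := by
    nlinarith [q1, mul_pos (pow_pos ca 2) (pow_pos sb 2), pow_pos sd 2]
  have key : (Real.cosh c * Real.sinh b - Real.sinh d) *
      (Real.cosh c * Real.sinh b + Real.sinh d) = 0 := by
    have hT : ((Real.cosh c * Real.sinh b - Real.sinh d) *
        (Real.cosh c * Real.sinh b + Real.sinh d)) *
        (1 - Real.sinh a ^ 2 * Real.sinh b ^ 2) = 0 := by
      linear_combination Real.sinh b ^ 2 * q3 - q1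
    rcases mul_eq_zero.1 hT with h | h
    · exact h
    · exact absurd h hK.ne'
  rcases mul_eq_zero.1 key with h | h
  · exact sub_eq_zero.1 h
  · exact absurd h (add_pos (mul_pos cc sb) sd).ne'
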